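/- Let (s_n) be a strictly increasing sequence of positive reals with 1/s_n → 0 as n → ∞, and suppose lim_{n→∞} s_{⌊nt⌋}/s_n = t for every real t in [0,1]. Then for any real numbers 0 ≤ a < b ≤ 1, the proportion of indices r ≤ n with a ≤ s_r/s_n ≤ b tends to b - a as n → ∞. -/

import Mathlib

open Filter Real
open scoped Classical

lemma count_aux (s : ℕ → ℝ) (hmono : StrictMono s) (hpos : ∀ n, 0 < s n)
    (hlim : ∀ t : ℝ, t ∈ Set.Icc (0 : ℝ) 1 →
      Tendsto (fun n : ℕ => s ⌊(n : ℝ) * t⌋₊ / s n) atTop (nhds t))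
    (c : ℝ) (hc0 : 0 ≤ c) (hc1 : c ≤ 1)
    (Q : ℝ → Prop) (hQ1 : ∀ x, x < c → Q x) (hQ2 : ∀ x, Q x → x ≤ c) :
    Tendsto (fun n : ℕ =>
      (((Finset.Icc 1 n).filter (fun r => Q (s r / s n))).card : ℝ) / n)
      atTop (nhds c) := by
  rcases eq_or_lt_of_le hc0 with rfl | hc
  · have hzero : ∀ n : ℕ, ((Finset.Icc 1 n).filter (fun r => Q (s r / s n))) = ∅ := by
      intro n
      apply Finset.filter_false_of_mem
      intro r _ hQ
      exact absurd (hQ2 _ hQ) (not_le.mpr (div_pos (hpos r) (hpos n)))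
    simpa [hzero] using (tendsto_const_nhds :
      Tendsto (fun _ : ℕ => (0 : ℝ)) atTop (nhds 0))
  · rw [Metric.tendsto_nhds]
    intro ε hε
    set t : ℝ := c - min c ε / 2 with ht
    have hmc := min_le_left c ε
    have hme := min_le_right c ε
    have hmpos : 0 < min c ε := lt_min hc hε
    have htpos : 0 < t := by simp only [ht]; linarith
    have htc : t < c := by simp only [ht]; linarith
    have ht1 : t ≤ 1 := le_trans htc.le hc1
    have hlo : ∀ᶠ n : ℕ in atTop, s ⌊(n : ℝ) * t⌋₊ / s n < c :=
      Filter.Tendsto.eventually_lt_const htc (hlim t ⟨htpos.le, ht1⟩)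
    have hεn : ∀ᶠ n : ℕ in atTop, 1 / (n : ℝ) < t - (c - ε) := by
      apply Filter.Tendsto.eventually_lt_const _ tendsto_one_div_atTop_nhds_zero_nat
      simp only [ht]; linarith
    have hup : ∀ᶠ n : ℕ in atTop,
        (((Finset.Icc 1 n).filter (fun r => Q (s r / s n))).card : ℝ) < (c + ε) * n := by
      by_cases hcb : c + ε ≤ 1
      · set t' : ℝ := c + ε / 2 with ht'
        have ht'c : c < t' := by simp only [ht']; linarith
        have ht'1 : t' ≤ 1 := by simp only [ht']; linarith
        have h3 : ∀ᶠ n : ℕ in atTop, c < s ⌊(n : ℝ) * t'⌋₊ / s n :=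
          Filter.Tendsto.eventually_const_lt ht'c (hlim t' ⟨by linarith, ht'1⟩)
        filter_upwards [h3, eventually_ge_atTop 1] with n h3 hn1
        have hn0 : (0 : ℝ) < n := by exact_mod_cast Nat.lt_of_lt_of_le Nat.zero_lt_one hn1
        have hsubset : (Finset.Icc 1 n).filter (fun r => Q (s r / s n))
            ⊆ Finset.range ⌊(n : ℝ) * t'⌋₊ := by
          intro r hr
          rw [Finset.mem_filter] at hr
          rw [Finset.mem_range]
          have hle : s r / s n ≤ c := hQ2 _ hr.2
          have hsn := hpos n
          have h1 : s r ≤ c * s n := (div_le_iff₀ hsn).mp hle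
          have h2 : c * s n < s ⌊(n : ℝ) * t'⌋₊ := (lt_div_iff₀ hsn).mp h3
          exact hmono.lt_iff_lt.mp (lt_of_le_of_lt h1 h2)
        have hcard : (((Finset.Icc 1 n).filter (fun r => Q (s r / s n))).card : ℝ)
            ≤ (⌊(n : ℝ) * t'⌋₊ : ℝ) := by
          have := Finset.card_le_card hsubset
          rw [Finset.card_range] at this
          exact_mod_cast this
        have hfl' : (⌊(n : ℝ) * t'⌋₊ : ℝ) ≤ (n : ℝ) * t' :=
          Nat.floor_le (by positivity)
        have hprod : 0 < (n : ℝ) * ε := mul_pos hn0 hε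
        simp only [ht'] at hfl'
        nlinarith
      · filter_upwards [eventually_ge_atTop 1] with n hn1
        have hn0 : (0 : ℝ) < n := by exact_mod_cast Nat.lt_of_lt_of_le Nat.zero_lt_one hn1
        have hcard : (((Finset.Icc 1 n).filter (fun r => Q (s r / s n))).card : ℝ) ≤ n := by
          have := Finset.card_le_card (Finset.filter_subset (fun r => Q (s r / s n))
            (Finset.Icc 1 n))
          rw [Nat.card_Icc] at this
          have : ((Finset.Icc 1 n).filter (fun r => Q (s r / s n))).card ≤ n := by omega
          exact_mod_cast this
        push_neg at hcb
        nlinarith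
    filter_upwards [hεn, hlo, hup, eventually_ge_atTop 1] with n hdn hfl hub hn1
    have hn0 : (0 : ℝ) < n := by exact_mod_cast Nat.lt_of_lt_of_le Nat.zero_lt_one hn1
    set k : ℝ := (((Finset.Icc 1 n).filter (fun r => Q (s r / s n))).card : ℝ) with hk
    rw [Real.dist_eq, abs_sub_lt_iff]
    constructor
    · have : k / n < c + ε := (div_lt_iff₀ hn0).mpr hub
      linarith
    · -- lower bound
      have hfloor_le_n : ⌊(n : ℝ) * t⌋₊ ≤ n := by
        have h1 : (n : ℝ) * t ≤ (n : ℝ) := by nlinarith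
        calc ⌊(n : ℝ) * t⌋₊ ≤ ⌊(n : ℝ)⌋₊ := Nat.floor_le_floor h1
          _ = n := Nat.floor_natCast n
      have hsubset : Finset.Icc 1 ⌊(n : ℝ) * t⌋₊
          ⊆ (Finset.Icc 1 n).filter (fun r => Q (s r / s n)) := by
        intro r hr
        rw [Finset.mem_Icc] at hr
        rw [Finset.mem_filter, Finset.mem_Icc]
        refine ⟨⟨hr.1, le_trans hr.2 hfloor_le_n⟩, ?_⟩
        apply hQ1
        have hmle : s r ≤ s ⌊(n : ℝ) * t⌋₊ := hmono.monotone hr.2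
        have hsn := hpos n
        calc s r / s n ≤ s ⌊(n : ℝ) * t⌋₊ / s n := by gcongr
          _ < c := hfl
      have hcard : (⌊(n : ℝ) * t⌋₊ : ℝ) ≤ k := by
        have := Finset.card_le_card hsubset
        rw [Nat.card_Icc] at this
        have h2 : ⌊(n : ℝ) * t⌋₊ ≤ ((Finset.Icc 1 n).filter (fun r => Q (s r / s n))).card := by
          omega
        simp only [hk]
        exact_mod_cast h2
      have hfl2 : (n : ℝ) * t - 1 < (⌊(n : ℝ) * t⌋₊ : ℝ) := Nat.sub_one_lt_floor _
      have h4 : 1 < (t - (c - ε)) * n := by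
        rw [div_lt_iff₀ hn0] at hdn; linarith
      have h5 : (c - ε) * n < k := by nlinarith
      have : c - ε < k / n := (lt_div_iff₀ hn0).mpr h5
      linarith

theorem stmt_2
    (s : ℕ → ℝ) (hmono : StrictMono s) (hpos : ∀ n, 0 < s n)
    (hinv : Tendsto (fun n => 1 / s n) atTop (nhds 0))
    (hlim : ∀ t : ℝ, t ∈ Set.Icc (0 : ℝ) 1 →
      Tendsto (fun n : ℕ => s ⌊(n : ℝ) * t⌋₊ / s n) atTop (nhds t))
    (a b : ℝ) (ha : 0 ≤ a) (hab : a < b) (hb : b ≤ 1) :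
    Tendsto
      (fun n : ℕ =>
        (((Finset.Icc 1 n).filter (fun r => a ≤ s r / s n ∧ s r / s n ≤ b)).card : ℝ) / n)
      atTop (nhds (b - a)) := by
  have hB := count_aux s hmono hpos hlim b (le_trans ha hab.le) hb
    (fun x => x ≤ b) (fun x h => h.le) (fun x h => h)
  have hA := count_aux s hmono hpos hlim a ha (le_trans hab.le hb)
    (fun x => x < a) (fun x h => h) (fun x h => h.le)
  have key : ∀ n : ℕ,
      (((Finset.Icc 1 n).filter (fun r => a ≤ s r / s n ∧ s r / s n ≤ b)).card : ℝ)
        = (((Finset.Icc 1 n).filter (fun r => s r / s n ≤ b)).card : ℝ)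
          - (((Finset.Icc 1 n).filter (fun r => s r / s n < a)).card : ℝ) := by
    intro n
    have hsub : (Finset.Icc 1 n).filter (fun r => s r / s n < a)
        ⊆ (Finset.Icc 1 n).filter (fun r => s r / s n ≤ b) :=
      Finset.monotone_filter_right _ (fun r _ h => le_of_lt (lt_of_lt_of_le h hab.le))
    have heq : (Finset.Icc 1 n).filter (fun r => a ≤ s r / s n ∧ s r / s n ≤ b)
        = (Finset.Icc 1 n).filter (fun r => s r / s n ≤ b)
          \ (Finset.Icc 1 n).filter (fun r => s r / s n < a) := by
      ext r
      simp only [Finset.mem_filter, Finset.mem_sdiff, not_and, not_lt]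
      tauto
    rw [heq, Finset.card_sdiff_of_subset hsub, Nat.cast_sub (Finset.card_le_card hsub)]
  refine (hB.sub hA).congr fun n => ?_
  rw [key n, sub_div]
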